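/- For full-rank O-lattices L, M, N in K^n with coweight-valued distances d(L,N) and sums of largest entries d_i(L,M) = μ_1 + ... + μ_i where d(L,M) = (μ_1 ≥ ... ≥ μ_n), the triangle inequality d_i(L,N) ≤ d_i(L,M) + d_i(M,N) holds for every 1 ≤ i ≤ n, and d_n(L,N) = d_n(L,M) + d_n(M,N). -/

import Mathlib

noncomputable section
open scoped Classical

variable {F : Type*} [Field F] {n : ℕ}

/-- `v` is a basis (over `F[[t]]`) of the full-rank lattice `L` in `K^n`, `K = F((t))`. -/
def IsLatticeBasis (L : Submodule (PowerSeries F) (Fin n → LaurentSeries F))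
    (v : Fin n → Fin n → LaurentSeries F) : Prop :=
  LinearIndependent (LaurentSeries F) v ∧ L = Submodule.span (PowerSeries F) (Set.range v)

/-- `L` is a full-rank `F[[t]]`-lattice in `K^n`. -/
def IsFullLattice (L : Submodule (PowerSeries F) (Fin n → LaurentSeries F)) : Prop :=
  ∃ v, IsLatticeBasis L v

/-- `t^λ` as an element of `K = F((t))`. -/
def tpow (lam : ℤ) : LaurentSeries F := HahnSeries.single lam 1

/-- `val (det L) = d` : the valuation of the determinant of an `O`-basis of `L` is `d`. -/
def HasValDet (L : Submodule (PowerSeries F) (Fin n → LaurentSeries F)) (d : ℤ) : Prop :=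
  ∃ v, IsLatticeBasis L v ∧ (Matrix.of v).det.order = d

/-- `w` is a generator of `L`: it belongs to some `O`-basis of `L`. -/
def IsGen (L : Submodule (PowerSeries F) (Fin n → LaurentSeries F))
    (w : Fin n → LaurentSeries F) : Prop :=
  ∃ v i, IsLatticeBasis L v ∧ v i = w

/-- `c(w, M) = lam`, i.e. `lam = min {μ : t^μ • w ∈ M}`. -/
def CVec (w : Fin n → LaurentSeries F) (M : Submodule (PowerSeries F) (Fin n → LaurentSeries F))
    (lam : ℤ) : Prop :=
  IsLeast {μ : ℤ | (tpow μ : LaurentSeries F) • w ∈ M} lam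

/-- `c(L, M) = c`, i.e. `c` is the minimum of `c(w,M)` over generators `w` of `L`. -/
def CLat (L M : Submodule (PowerSeries F) (Fin n → LaurentSeries F)) (c : ℤ) : Prop :=
  IsLeast {μ : ℤ | ∃ w, IsGen L w ∧ CVec w M μ} c

/-- `A(L_1, ..., L_n) = a` : the minimum of `val (det (v_1, ..., v_n))` over `v_i ∈ L_i`. -/
def AIs (Ls : Fin n → Submodule (PowerSeries F) (Fin n → LaurentSeries F)) (a : ℤ) : Prop :=
  IsLeast {d : ℤ | ∃ v : Fin n → Fin n → LaurentSeries F,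
    (∀ i, v i ∈ Ls i) ∧ (Matrix.of v).det ≠ 0 ∧ (Matrix.of v).det.order = d} a

/-- `x` lies in `t • L`. -/
def MemTL (L : Submodule (PowerSeries F) (Fin n → LaurentSeries F))
    (x : Fin n → LaurentSeries F) : Prop :=
  ∃ y ∈ L, x = (PowerSeries.X : PowerSeries F) • y

end
noncomputable section

/-- `d(L,M) = μ`, the coweight-valued distance: there is an `O`-basis `e_1, ..., e_n` of
`L` and a weakly decreasing sequence `μ_1 ≥ ... ≥ μ_n` (the elementary divisors of `M`
relative to `L`) such that `t^{-μ_1} e_1, ..., t^{-μ_n} e_n` is an `O`-basis of `M`. -/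
def IsDist {F : Type*} [Field F] {n : ℕ}
    (L M : Submodule (PowerSeries F) (Fin n → LaurentSeries F)) (μ : Fin n → ℤ) : Prop :=
  Antitone μ ∧ ∃ v, IsLatticeBasis L v ∧
    IsLatticeBasis M (fun i => (tpow (-(μ i)) : LaurentSeries F) • v i)

/-- `d_k(L,M)`: the sum of the first `k` (i.e. the `k` largest) entries of `d(L,M)`,
the pairing of `d(L,M)` with the fundamental weight `ω_k`. -/
def dPartial {n : ℕ} (k : ℕ) (μ : Fin n → ℤ) : ℤ :=
  ∑ s ∈ Finset.univ.filter (fun s : Fin n => (s : ℕ) < k), μ s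

end

noncomputable section Helpers
open scoped Classical
open Matrix

variable {F : Type*} [Field F] {n : ℕ}

local notation "φ" => algebraMap (PowerSeries F) (LaurentSeries F)
local notation "vv" => (Valued.v : Valuation (LaurentSeries F) (WithZero (Multiplicative ℤ)))

lemma val_tpow (a : ℤ) : vv (tpow a : LaurentSeries F) = (Multiplicative.ofAdd (-a) : Multiplicative ℤ) :=
  LaurentSeries.valuation_single_zpow (K := F) a

lemma tpow_mul (a b : ℤ) : (tpow a : LaurentSeries F) * tpow b = tpow (a + b) := by
  simp [tpow, HahnSeries.single_mul_single]

lemma prod_tpow {ι : Type*} (s : Finset ι) (a : ι → ℤ) :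
    (∏ i ∈ s, (tpow (a i) : LaurentSeries F)) = tpow (∑ i ∈ s, a i) := by
  classical
  induction s using Finset.induction with
  | empty => simp [tpow]
  | insert _ _ h ih => rw [Finset.prod_insert h, ih, tpow_mul, ← Finset.sum_insert h]

lemma val_phi_le_one (r : PowerSeries F) : vv (φ r) ≤ 1 := by
  erw [IsDedekindDomain.HeightOneSpectrum.valuation_of_algebraMap]
  exact (PowerSeries.idealX F).intValuation_le_one r

lemma val_phi_unit {r : PowerSeries F} (hr : IsUnit r) : vv (φ r) = 1 := by
  obtain ⟨u, rfl⟩ := hr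
  have h1 : vv (φ (u : PowerSeries F)) * vv (φ ((u⁻¹ : (PowerSeries F)ˣ) : PowerSeries F)) = 1 := by
    rw [← _root_.map_mul, ← _root_.map_mul]; simp
  refine le_antisymm (val_phi_le_one _) ?_
  calc (1 : WithZero (Multiplicative ℤ)) = _ := h1.symm
    _ ≤ vv (φ (u : PowerSeries F)) * 1 := mul_le_mul_right (val_phi_le_one _) _
    _ = _ := mul_one _

lemma val_tpow_le_iff {a b : ℤ} :
    vv (tpow a : LaurentSeries F) ≤ vv (tpow b : LaurentSeries F) ↔ b ≤ a := by
  rw [val_tpow, val_tpow, WithZero.coe_le_coe, Multiplicative.ofAdd_le, neg_le_neg_iff]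

lemma coeff_ext {v : Fin n → Fin n → LaurentSeries F}
    (hv : LinearIndependent (LaurentSeries F) v) {a b : Fin n → LaurentSeries F}
    (h : ∑ j, a j • v j = ∑ j, b j • v j) : a = b := by
  have h0 : ∑ j, (a - b) j • v j = 0 := by
    have : ∀ x : Fin n, (a x - b x) • v x = a x • v x - b x • v x := by intro x; funext j; simp [Pi.smul_apply, sub_mul]
    simp only [Pi.sub_apply]
    rw [Finset.sum_congr rfl fun x _ => this x, Finset.sum_sub_distrib, h, sub_self]
  have := Fintype.linearIndependent_iff.mp hv (a - b) h0
  funext j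
  have hj := this j
  simpa [sub_eq_zero] using hj


lemma phi_injective : Function.Injective (φ : PowerSeries F → LaurentSeries F) := by
  rw [LaurentSeries.coe_algebraMap]; exact HahnSeries.ofPowerSeries_injective

lemma coeffs_of_mem {L : Submodule (PowerSeries F) (Fin n → LaurentSeries F)}
    {v : Fin n → Fin n → LaurentSeries F} (hv : IsLatticeBasis L v)
    (x : Fin n → LaurentSeries F) (hx : x ∈ L) :
    ∃ c : Fin n → PowerSeries F, x = ∑ j, φ (c j) • v j := by
  rw [hv.2] at hx
  obtain ⟨c, hc⟩ := (Submodule.mem_span_range_iff_exists_fun _).mp hx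
  exact ⟨c, by rw [← hc]; exact Finset.sum_congr rfl fun j _ => (algebraMap_smul _ _ _).symm⟩

lemma exists_transition {L : Submodule (PowerSeries F) (Fin n → LaurentSeries F)}
    {v u : Fin n → Fin n → LaurentSeries F} (hv : IsLatticeBasis L v) (hu : IsLatticeBasis L u) :
    ∃ P : Matrix (Fin n) (Fin n) (PowerSeries F),
      (∀ i, u i = ∑ j, φ (P i j) • v j) ∧ IsUnit P.det := by
  have humem : ∀ i, u i ∈ L := fun i => by
    rw [hu.2]; exact Submodule.subset_span ⟨i, rfl⟩
  have hvmem : ∀ i, v i ∈ L := fun i => by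
    rw [hv.2]; exact Submodule.subset_span ⟨i, rfl⟩
  choose P hP using fun i => coeffs_of_mem hv (u i) (humem i)
  choose Q hQ using fun i => coeffs_of_mem hu (v i) (hvmem i)
  refine ⟨Matrix.of P, hP, Matrix.isUnit_det_of_left_inverse (B := Matrix.of Q) ?_⟩
  have key : ∀ i, (fun j => φ ((Matrix.of Q * Matrix.of P) i j)) =
      (fun j => φ ((1 : Matrix (Fin n) (Fin n) (PowerSeries F)) i j)) := by
    intro i
    apply coeff_ext hv.1
    have lhs : ∑ j, φ ((Matrix.of Q * Matrix.of P) i j) • v j = v i := by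
      calc ∑ j, φ ((Matrix.of Q * Matrix.of P) i j) • v j
          = ∑ j, (∑ l, φ (Q i l) * φ (P l j)) • v j := by
            refine Finset.sum_congr rfl fun j _ => ?_
            rw [Matrix.mul_apply]
            congr 1
            rw [map_sum]
            exact Finset.sum_congr rfl fun l _ => map_mul _ _ _
        _ = ∑ j, ∑ l, (φ (Q i l) * φ (P l j)) • v j := by
            exact Finset.sum_congr rfl fun j _ => Finset.sum_smul
        _ = ∑ l, φ (Q i l) • ∑ j, φ (P l j) • v j := by
            rw [Finset.sum_comm]
            refine Finset.sum_congr rfl fun l _ => ?_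
            rw [Finset.smul_sum]
            exact Finset.sum_congr rfl fun j _ => (smul_smul _ _ _).symm
        _ = ∑ l, φ (Q i l) • u l := by
            exact Finset.sum_congr rfl fun l _ => by rw [← hP l]
        _ = v i := (hQ i).symm
    have rhs : ∑ j, φ ((1 : Matrix (Fin n) (Fin n) (PowerSeries F)) i j) • v j = v i := by
      rw [Finset.sum_eq_single i]
      · simp [Matrix.one_apply]
      · intro b _ hb
        rw [Matrix.one_apply_ne (Ne.symm hb), map_zero]
        exact zero_smul (LaurentSeries F) (v b)
      · simp
    rw [lhs, rhs]
  have : Matrix.of Q * Matrix.of P = 1 := by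
    apply Matrix.ext
    intro i j
    exact phi_injective (congrFun (key i) j)
  exact this

lemma det_expand {k : ℕ} (C : Fin k → Fin n → LaurentSeries F)
    (Z : Fin n → Fin k → LaurentSeries F) :
    (Matrix.of fun i j => ∑ l, C i l * Z l j).det
      = ∑ g : Fin k → Fin n, (∏ i, C i (g i)) * (Matrix.of fun i j => Z (g i) j).det := by
  have h0 : ∀ N : Matrix (Fin k) (Fin k) (LaurentSeries F),
      N.det = (Matrix.detRowAlternating (R := LaurentSeries F) (n := Fin k)).toMultilinearMap N :=
    fun _ => rfl
  rw [h0]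
  have h1 : (Matrix.of fun i j => ∑ l, C i l * Z l j : Matrix (Fin k) (Fin k) (LaurentSeries F))
      = fun i => ∑ l, C i l • Z l := by
    funext i j
    simp [Finset.sum_apply]
  rw [h1]
  rw [MultilinearMap.map_sum]
  refine Finset.sum_congr rfl fun g _ => ?_
  have := MultilinearMap.map_smul_univ
    (Matrix.detRowAlternating (R := LaurentSeries F) (n := Fin k)).toMultilinearMap
    (fun i => C i (g i)) (fun i => Z (g i))
  rw [this, smul_eq_mul, h0]
  rfl

lemma strictMono_le_val {k : ℕ} {f : Fin k → Fin n} (hf : StrictMono f) :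
    ∀ m : ℕ, ∀ i : Fin k, (i : ℕ) = m → m ≤ (f i : ℕ) := by
  intro m
  induction m with
  | zero => intro i _; exact Nat.zero_le _
  | succ m ih =>
    intro i him
    have hm : m < k := by omega
    have hji : (⟨m, hm⟩ : Fin k) < i := by rw [Fin.lt_def]; simp; omega
    have h1 : (f ⟨m, hm⟩ : ℕ) < (f i : ℕ) := hf hji
    have h2 := ih ⟨m, hm⟩ rfl
    omega

lemma sum_antitone_le {k : ℕ} (hk : k ≤ n) {ν : Fin n → ℤ} (hν : Antitone ν)
    {g : Fin k → Fin n} (hg : Function.Injective g) :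
    ∑ i, ν (g i) ≤ ∑ i : Fin k, ν (Fin.castLE hk i) := by
  classical
  set T : Finset (Fin n) := Finset.univ.image g with hT
  have hcard : T.card = k := by
    rw [hT, Finset.card_image_of_injective _ hg, Finset.card_univ, Fintype.card_fin]
  have h1 : ∑ i, ν (g i) = ∑ j ∈ T, ν j := by
    rw [hT, Finset.sum_image (fun a _ b _ hab => hg hab)]
  have h2 : ∑ j ∈ T, ν j = ∑ i : Fin k, ν (T.orderEmbOfFin hcard i) := by
    refine (Finset.sum_bij (fun (i : Fin k) _ => T.orderEmbOfFin hcard i) ?_ ?_ ?_ ?_).symm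
    · intro i _; exact Finset.orderEmbOfFin_mem T hcard i
    · intro a _ b _ hab; exact (T.orderEmbOfFin hcard).injective hab
    · intro b hb
      have hbr : b ∈ Set.range (T.orderEmbOfFin hcard) := by
        rw [Finset.range_orderEmbOfFin]; exact hb
      obtain ⟨i, hi⟩ := hbr
      exact ⟨i, Finset.mem_univ i, hi⟩
    · intro i _; rfl
  rw [h1, h2]
  refine Finset.sum_le_sum fun i _ => ?_
  refine hν ?_
  have := strictMono_le_val (T.orderEmbOfFin hcard).strictMono (i : ℕ) i rfl
  exact Fin.le_def.mpr (by simpa using this)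

lemma exists_unit_minor {k : ℕ} (hk : k ≤ n) (m : Matrix (Fin n) (Fin n) F)
    (hm : IsUnit m.det) :
    ∃ s : Fin k → Fin n, Function.Injective s ∧ (m.submatrix (Fin.castLE hk) s).det ≠ 0 := by
  classical
  have hmu : IsUnit m := (Matrix.isUnit_iff_isUnit_det m).mpr hm
  have hrows : LinearIndependent F (fun i : Fin n => m i) :=
    Matrix.linearIndependent_rows_iff_isUnit.mpr hmu
  have hrowsk : LinearIndependent F (fun i : Fin k => m (Fin.castLE hk i)) :=
    hrows.comp (Fin.castLE hk) (Fin.castLE_injective hk)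
  set Rm : Matrix (Fin k) (Fin n) F := m.submatrix (Fin.castLE hk) id with hRm
  have hvm : Function.Injective Rm.vecMul := by
    rw [Matrix.vecMul_injective_iff]
    exact hrowsk
  have hmvt : Function.Injective (Matrix.mulVecLin Rmᵀ) := by
    intro a b hab
    apply hvm
    simpa [Matrix.mulVecLin_apply, Matrix.mulVec_transpose] using hab
  have hrankT : Rmᵀ.rank = k := by
    rw [Matrix.rank]
    rw [LinearMap.finrank_range_of_inj hmvt]
    simp [Module.finrank_pi]
  have hrank : Rm.rank = k := by rw [← Matrix.rank_transpose]; exact hrankT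
  have hrange : LinearMap.range Rm.mulVecLin = ⊤ := by
    apply Submodule.eq_top_of_finrank_eq
    have : Module.finrank F (Fin k → F) = k := by simp [Module.finrank_pi]
    rw [this]
    exact hrank
  have hspan : Submodule.span F (Set.range fun j => Rmᵀ j) = ⊤ := by
    rw [show (fun j => Rmᵀ j) = Rm.col from rfl, ← Matrix.range_mulVecLin]; exact hrange
  obtain ⟨b, hbsub, hbspan, hblin⟩ := exists_linearIndependent F (Set.range fun j => Rmᵀ j)
  rw [hspan] at hbspan
  have hbfin : b.Finite := Set.Finite.subset (Set.finite_range _) hbsub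
  have : Fintype b := hbfin.fintype
  have hbasis : Module.Basis b F (Fin k → F) :=
    Module.Basis.mk hblin (by rw [Subtype.range_coe]; exact hbspan.symm ▸ le_rfl)
  have hcardb : Fintype.card b = k := by
    rw [← Module.finrank_eq_card_basis hbasis]
    simp [Module.finrank_pi]
  have e : Fin k ≃ b := (Fintype.equivFinOfCardEq hcardb).symm
  have hchoice : ∀ x : b, ∃ j, Rmᵀ j = (x : Fin k → F) := fun x => hbsub x.2
  choose jmap hjmap using hchoice
  refine ⟨fun i => jmap (e i), ?_, ?_⟩
  · intro a b' hab
    have hab' : jmap (e a) = jmap (e b') := hab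
    have : ((e a : _) : Fin k → F) = ((e b' : _) : Fin k → F) := by
      rw [← hjmap (e a), ← hjmap (e b'), hab']
    exact e.injective (Subtype.ext this)
  · set A : Matrix (Fin k) (Fin k) F := m.submatrix (Fin.castLE hk) (fun i => jmap (e i)) with hA
    have hcols : (fun j : Fin k => Aᵀ j) = fun j => ((e j : _) : Fin k → F) := by
      funext j
      rw [← hjmap (e j)]
      rfl
    have hlin : LinearIndependent F (fun j : Fin k => Aᵀ j) := by
      rw [hcols]
      exact hblin.comp e e.injective
    have := Matrix.linearIndependent_cols_iff_isUnit.mp hlin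
    exact ((Matrix.isUnit_iff_isUnit_det A).mp this).ne_zero

lemma sum_smul' {ι : Type*} (t : Finset ι) (f : ι → LaurentSeries F)
    (x : Fin n → LaurentSeries F) :
    (∑ l ∈ t, f l) • x = ∑ l ∈ t, f l • x := by
  funext j
  simp [Finset.sum_apply, Pi.smul_apply, smul_eq_mul, Finset.sum_mul]

lemma smul_smul' (a b : LaurentSeries F) (x : Fin n → LaurentSeries F) :
    a • b • x = (a * b) • x := by
  funext t
  simp [Pi.smul_apply, smul_eq_mul, mul_assoc]

lemma w_expand {v : Fin n → Fin n → LaurentSeries F} {μ : Fin n → ℤ}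
    {A : Matrix (Fin n) (Fin n) (PowerSeries F)} {w : Fin n → Fin n → LaurentSeries F}
    (hA : ∀ i, w i = ∑ j, φ (A i j) • ((tpow (-(μ j)) : LaurentSeries F) • v j)) (l : Fin n) :
    w l = ∑ j, (φ (A l j) * (tpow (-(μ j)) : LaurentSeries F)) • v j := by
  rw [hA l]
  exact Finset.sum_congr rfl fun j _ => smul_smul' _ _ _

lemma star_eq {v w u : Fin n → Fin n → LaurentSeries F} {μ ν ρ : Fin n → ℤ}
    {A B C : Matrix (Fin n) (Fin n) (PowerSeries F)}
    (hLvLI : LinearIndependent (LaurentSeries F) v)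
    (hA : ∀ i, w i = ∑ j, φ (A i j) • ((tpow (-(μ j)) : LaurentSeries F) • v j))
    (hB : ∀ i, u i = ∑ j, φ (B i j) • v j)
    (hC : ∀ i, (tpow (-(ρ i)) : LaurentSeries F) • u i
        = ∑ l, φ (C i l) • ((tpow (-(ν l)) : LaurentSeries F) • w l)) :
    ∀ i j, (tpow (-(ρ i)) : LaurentSeries F) * φ (B i j)
        = ∑ l, φ (C i l) * ((tpow (-(ν l)) : LaurentSeries F)
            * (φ (A l j) * (tpow (-(μ j)) : LaurentSeries F))) := by
  intro i j
  have lhs : (tpow (-(ρ i)) : LaurentSeries F) • u i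
      = ∑ j, ((tpow (-(ρ i)) : LaurentSeries F) * φ (B i j)) • v j := by
    rw [hB i, Finset.smul_sum]
    exact Finset.sum_congr rfl fun j _ => smul_smul' _ _ _
  have rhs : ∑ l, φ (C i l) • ((tpow (-(ν l)) : LaurentSeries F) • w l)
      = ∑ j, (∑ l, φ (C i l) * ((tpow (-(ν l)) : LaurentSeries F)
          * (φ (A l j) * (tpow (-(μ j)) : LaurentSeries F)))) • v j := by
    calc ∑ l, φ (C i l) • ((tpow (-(ν l)) : LaurentSeries F) • w l)
        = ∑ l, ∑ j, (φ (C i l) * ((tpow (-(ν l)) : LaurentSeries F)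
            * (φ (A l j) * (tpow (-(μ j)) : LaurentSeries F)))) • v j := by
          refine Finset.sum_congr rfl fun l _ => ?_
          rw [w_expand hA l, Finset.smul_sum, Finset.smul_sum]
          refine Finset.sum_congr rfl fun j _ => ?_
          rw [smul_smul', smul_smul', mul_assoc]
      _ = ∑ j, (∑ l, φ (C i l) * ((tpow (-(ν l)) : LaurentSeries F)
            * (φ (A l j) * (tpow (-(μ j)) : LaurentSeries F)))) • v j := by
          rw [Finset.sum_comm]
          exact Finset.sum_congr rfl fun j _ => (sum_smul' _ _ _).symm
  have key : (fun j => (tpow (-(ρ i)) : LaurentSeries F) * φ (B i j))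
      = (fun j => ∑ l, φ (C i l) * ((tpow (-(ν l)) : LaurentSeries F)
          * (φ (A l j) * (tpow (-(μ j)) : LaurentSeries F)))) := by
    apply coeff_ext hLvLI
    rw [← lhs, ← rhs]
    exact hC i
  exact congrFun key j

lemma isUnit_of_constantCoeff {r : PowerSeries F} (h : PowerSeries.constantCoeff r ≠ 0) :
    IsUnit r :=
  PowerSeries.isUnit_iff_constantCoeff.mpr (isUnit_iff_ne_zero.mpr h)

lemma exists_unit_minor' {k : ℕ} (hk : k ≤ n) (B : Matrix (Fin n) (Fin n) (PowerSeries F))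
    (hB : IsUnit B.det) :
    ∃ s : Fin k → Fin n, Function.Injective s ∧
      IsUnit (B.submatrix (Fin.castLE hk) s).det := by
  classical
  have hdet : IsUnit ((B.map (PowerSeries.constantCoeff : PowerSeries F →+* F)).det) := by
    rw [show B.map ⇑(PowerSeries.constantCoeff : PowerSeries F →+* F)
        = (PowerSeries.constantCoeff : PowerSeries F →+* F).mapMatrix B from rfl,
      ← RingHom.map_det]
    exact hB.map _
  obtain ⟨s, hs, hsd⟩ := exists_unit_minor hk _ hdet
  refine ⟨s, hs, isUnit_of_constantCoeff ?_⟩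
  intro h0
  apply hsd
  rw [Matrix.submatrix_map,
    show (B.submatrix (Fin.castLE hk) s).map ⇑(PowerSeries.constantCoeff : PowerSeries F →+* F)
      = (PowerSeries.constantCoeff : PowerSeries F →+* F).mapMatrix
          (B.submatrix (Fin.castLE hk) s) from rfl,
    ← RingHom.map_det]
  exact h0

lemma dPartial_eq {k : ℕ} (hk : k ≤ n) (μ' : Fin n → ℤ) :
    dPartial k μ' = ∑ i : Fin k, μ' (Fin.castLE hk i) := by
  classical
  rw [dPartial]
  refine (Finset.sum_bij (fun (i : Fin k) _ => Fin.castLE hk i) ?_ ?_ ?_ ?_).symm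
  · intro i _
    simp only [Finset.mem_filter, Finset.mem_univ, true_and]
    exact i.2
  · intro a _ b _ hab
    exact Fin.castLE_injective hk hab
  · intro b hb
    simp only [Finset.mem_filter, Finset.mem_univ, true_and] at hb
    exact ⟨⟨(b : ℕ), hb⟩, Finset.mem_univ _, rfl⟩
  · intro i _; rfl

lemma val_tpow_inj {a b : ℤ} (h : vv (tpow a : LaurentSeries F) = vv (tpow b : LaurentSeries F)) :
    a = b := by
  rw [val_tpow, val_tpow, WithZero.coe_inj] at h
  exact neg_injective (Multiplicative.ofAdd.injective h)

theorem dist_triangle_dominance' {L M N : Submodule (PowerSeries F) (Fin n → LaurentSeries F)}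
    {μ ν ρ : Fin n → ℤ}
    (hLM : IsDist L M μ) (hMN : IsDist M N ν) (hLN : IsDist L N ρ) :
    (∀ k : ℕ, 1 ≤ k → k ≤ n → dPartial k ρ ≤ dPartial k μ + dPartial k ν) ∧
      (∑ s, ρ s) = (∑ s, μ s) + ∑ s, ν s := by
  classical
  obtain ⟨hμa, v, hLv, hMv⟩ := hLM
  obtain ⟨hνa, w, hMw, hNw⟩ := hMN
  obtain ⟨hρa, u, hLu, hNu⟩ := hLN
  obtain ⟨A, hA, hAu⟩ := exists_transition hMv hMw
  obtain ⟨B, hB, hBu⟩ := exists_transition hLv hLu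
  obtain ⟨C, hC, hCu⟩ := exists_transition hNw hNu
  have star := star_eq (μ := μ) (ν := ν) (ρ := ρ) (A := A) (B := B) (C := C) hLv.1 hA hB hC
  have hdetB := val_phi_unit hBu
  have hdetA := val_phi_unit hAu
  have hdetC := val_phi_unit hCu
  set Xmat : Matrix (Fin n) (Fin n) (LaurentSeries F) :=
    Matrix.of (fun i j => (tpow (-(ρ i)) : LaurentSeries F) * φ (B i j)) with hXmat
  have hXentry : ∀ i j, Xmat i j = (tpow (-(ρ i)) : LaurentSeries F) * φ (B i j) :=
    fun i j => rfl
  have hdet1 : Xmat.det = tpow (-(∑ i, ρ i)) * φ B.det := by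
    have h1 : Xmat.det = (∏ i, (tpow (-(ρ i)) : LaurentSeries F)) * (B.map ⇑φ).det :=
      Matrix.det_mul_column (fun i => (tpow (-(ρ i)) : LaurentSeries F)) (B.map ⇑φ)
    rw [h1, prod_tpow, Finset.sum_neg_distrib]
    congr 1
    exact ((RingHom.map_det φ B).trans rfl).symm
  have hprod : Xmat = Matrix.of (fun i l => (tpow (-(ν l)) : LaurentSeries F) * φ (C i l))
      * Matrix.of (fun l j => (tpow (-(μ j)) : LaurentSeries F) * φ (A l j)) := by
    apply Matrix.ext
    intro i j
    rw [Matrix.mul_apply, hXentry i j, star i j]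
    refine Finset.sum_congr rfl fun l _ => ?_
    simp only [Matrix.of_apply]
    ring
  have hdet2 : Xmat.det = (tpow (-(∑ i, ν i)) * φ C.det)
      * (tpow (-(∑ i, μ i)) * φ A.det) := by
    rw [hprod, Matrix.det_mul]
    congr 1
    · have h1 : (Matrix.of (fun i l => (tpow (-(ν l)) : LaurentSeries F) * φ (C i l))).det
          = (∏ i, (tpow (-(ν i)) : LaurentSeries F)) * (C.map ⇑φ).det :=
        Matrix.det_mul_row (fun l => (tpow (-(ν l)) : LaurentSeries F)) (C.map ⇑φ)
      rw [h1, prod_tpow, Finset.sum_neg_distrib]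
      congr 1
      exact ((RingHom.map_det φ C).trans rfl).symm
    · have h1 : (Matrix.of (fun l j => (tpow (-(μ j)) : LaurentSeries F) * φ (A l j))).det
          = (∏ i, (tpow (-(μ i)) : LaurentSeries F)) * (A.map ⇑φ).det :=
        Matrix.det_mul_row (fun j => (tpow (-(μ j)) : LaurentSeries F)) (A.map ⇑φ)
      rw [h1, prod_tpow, Finset.sum_neg_distrib]
      congr 1
      exact ((RingHom.map_det φ A).trans rfl).symm
  constructor
  · -- the inequalities
    intro k _ hkn
    obtain ⟨s, hs, hsu⟩ := exists_unit_minor' hkn B hBu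
    set Sρ : ℤ := ∑ i : Fin k, ρ (Fin.castLE hkn i) with hSρ
    set Sμ : ℤ := ∑ i : Fin k, μ (Fin.castLE hkn i) with hSμ
    set Sν : ℤ := ∑ i : Fin k, ν (Fin.castLE hkn i) with hSν
    set minor : LaurentSeries F := (Xmat.submatrix (Fin.castLE hkn) s).det with hminor
    have hvalminor : vv minor = vv (tpow (-Sρ) : LaurentSeries F) := by
      have h1 : minor = (∏ i : Fin k, (tpow (-(ρ (Fin.castLE hkn i))) : LaurentSeries F))
          * ((B.submatrix (Fin.castLE hkn) s).map ⇑φ).det :=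
        Matrix.det_mul_column (fun i => (tpow (-(ρ (Fin.castLE hkn i))) : LaurentSeries F))
          ((B.submatrix (Fin.castLE hkn) s).map ⇑φ)
      have h2 : ((B.submatrix (Fin.castLE hkn) s).map ⇑φ).det
          = φ ((B.submatrix (Fin.castLE hkn) s).det) :=
        ((RingHom.map_det φ _).trans rfl).symm
      rw [h1, prod_tpow, Finset.sum_neg_distrib, Valuation.map_mul, h2, val_phi_unit hsu,
        mul_one, hSρ]
    have hbound : vv minor ≤ vv (tpow (-(Sν + Sμ)) : LaurentSeries F) := by
      have hXs : Xmat.submatrix (Fin.castLE hkn) s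
          = Matrix.of (fun (i : Fin k) (j : Fin k) => ∑ l, φ (C (Fin.castLE hkn i) l)
              * ((tpow (-(ν l)) : LaurentSeries F)
                  * (φ (A l (s j)) * (tpow (-(μ (s j))) : LaurentSeries F)))) := by
        apply Matrix.ext
        intro i j
        exact star (Fin.castLE hkn i) (s j)
      have hexp := det_expand (fun (i : Fin k) l => φ (C (Fin.castLE hkn i) l))
        (fun l (j : Fin k) => (tpow (-(ν l)) : LaurentSeries F)
          * (φ (A l (s j)) * (tpow (-(μ (s j))) : LaurentSeries F)))
      rw [hminor, hXs, hexp]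
      apply Valuation.map_sum_le
      intro g _
      rw [Valuation.map_mul]
      have hC1 : vv (∏ i : Fin k, φ (C (Fin.castLE hkn i) (g i))) ≤ 1 := by
        rw [map_prod]
        exact Finset.prod_le_one' (fun i _ => val_phi_le_one _)
      by_cases hg : Function.Injective g
      · have hZdet : (Matrix.of fun (i j : Fin k) =>
            (tpow (-(ν (g i))) : LaurentSeries F)
              * (φ (A (g i) (s j)) * (tpow (-(μ (s j))) : LaurentSeries F))).det
            = tpow (-(∑ i : Fin k, ν (g i)))
              * (tpow (-(∑ j : Fin k, μ (s j))) * φ ((A.submatrix g s).det)) := by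
          have h1 : (Matrix.of fun (i j : Fin k) =>
              (tpow (-(ν (g i))) : LaurentSeries F)
                * (φ (A (g i) (s j)) * (tpow (-(μ (s j))) : LaurentSeries F))).det
              = (∏ i : Fin k, (tpow (-(ν (g i))) : LaurentSeries F))
                * (Matrix.of fun (i j : Fin k) =>
                    φ (A (g i) (s j)) * (tpow (-(μ (s j))) : LaurentSeries F)).det :=
            Matrix.det_mul_column (fun i => (tpow (-(ν (g i))) : LaurentSeries F)) _
          have h2 : (Matrix.of fun (i j : Fin k) =>
              φ (A (g i) (s j)) * (tpow (-(μ (s j))) : LaurentSeries F))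
              = Matrix.of fun (i j : Fin k) =>
                (tpow (-(μ (s j))) : LaurentSeries F) * ((A.submatrix g s).map ⇑φ) i j := by
            apply Matrix.ext
            intro i j
            exact mul_comm _ _
          have h3 : (Matrix.of fun (i j : Fin k) =>
              (tpow (-(μ (s j))) : LaurentSeries F) * ((A.submatrix g s).map ⇑φ) i j).det
              = (∏ j : Fin k, (tpow (-(μ (s j))) : LaurentSeries F))
                * ((A.submatrix g s).map ⇑φ).det :=
            Matrix.det_mul_row (fun j => (tpow (-(μ (s j))) : LaurentSeries F)) _
          have h4 : ((A.submatrix g s).map ⇑φ).det = φ ((A.submatrix g s).det) :=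
            ((RingHom.map_det φ _).trans rfl).symm
          rw [h1, h2, h3, h4, prod_tpow, prod_tpow, Finset.sum_neg_distrib,
            Finset.sum_neg_distrib]
        rw [hZdet]
        have hφ := val_phi_le_one ((A.submatrix g s).det)
        have step1 : vv ((tpow (-(∑ i : Fin k, ν (g i))) : LaurentSeries F)
            * ((tpow (-(∑ j : Fin k, μ (s j))) : LaurentSeries F) * φ ((A.submatrix g s).det)))
            ≤ vv ((tpow (-(∑ i : Fin k, ν (g i))) : LaurentSeries F))
              * vv ((tpow (-(∑ j : Fin k, μ (s j))) : LaurentSeries F)) := by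
          rw [Valuation.map_mul, Valuation.map_mul]
          refine mul_le_mul_right ?_ _
          calc vv ((tpow (-(∑ j : Fin k, μ (s j))) : LaurentSeries F)) * vv (φ ((A.submatrix g s).det))
              ≤ vv ((tpow (-(∑ j : Fin k, μ (s j))) : LaurentSeries F)) * 1 := mul_le_mul_right hφ _
            _ = _ := mul_one _
        have step2 : vv ((tpow (-(∑ i : Fin k, ν (g i))) : LaurentSeries F))
            * vv ((tpow (-(∑ j : Fin k, μ (s j))) : LaurentSeries F))
            ≤ vv (tpow (-(Sν + Sμ)) : LaurentSeries F) := by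
          rw [← Valuation.map_mul, tpow_mul]
          apply val_tpow_le_iff.mpr
          have hg1 := sum_antitone_le hkn hνa hg
          have hs1 := sum_antitone_le hkn hμa hs
          omega
        calc vv (∏ i : Fin k, φ (C (Fin.castLE hkn i) (g i)))
              * vv ((tpow (-(∑ i : Fin k, ν (g i))) : LaurentSeries F)
                * ((tpow (-(∑ j : Fin k, μ (s j))) : LaurentSeries F)
                  * φ ((A.submatrix g s).det)))
            ≤ 1 * (vv ((tpow (-(∑ i : Fin k, ν (g i))) : LaurentSeries F))
                * vv ((tpow (-(∑ j : Fin k, μ (s j))) : LaurentSeries F))) :=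
              mul_le_mul' hC1 step1
          _ = vv ((tpow (-(∑ i : Fin k, ν (g i))) : LaurentSeries F))
                * vv ((tpow (-(∑ j : Fin k, μ (s j))) : LaurentSeries F)) := one_mul _
          _ ≤ vv (tpow (-(Sν + Sμ)) : LaurentSeries F) := step2
      · obtain ⟨a, b, hab, hne⟩ : ∃ a b, g a = g b ∧ a ≠ b :=
          Function.not_injective_iff.mp hg
        have hz : (Matrix.of fun (i j : Fin k) =>
            (tpow (-(ν (g i))) : LaurentSeries F)
              * (φ (A (g i) (s j)) * (tpow (-(μ (s j))) : LaurentSeries F))).det = 0 := by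
          apply Matrix.det_zero_of_row_eq hne
          funext j
          simp only [Matrix.of_apply, hab]
        rw [hz, Valuation.map_zero, mul_zero]
        exact zero_le'
    have hfin : Sρ ≤ Sν + Sμ := by
      rw [hvalminor] at hbound
      have := val_tpow_le_iff.mp hbound
      omega
    rw [dPartial_eq hkn ρ, dPartial_eq hkn μ, dPartial_eq hkn ν, ← hSρ, ← hSμ, ← hSν]
    omega
  · -- equality of total sums
    have h3 := hdet1.symm.trans hdet2
    have h4 := congrArg vv h3
    rw [Valuation.map_mul, Valuation.map_mul, Valuation.map_mul, Valuation.map_mul,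
      hdetA, hdetB, hdetC, mul_one, mul_one, mul_one, ← Valuation.map_mul, tpow_mul] at h4
    have h5 := val_tpow_inj h4
    omega

end Helpers

/-- **Triangle inequality in the dominance order.** For full-rank lattices `L, M, N` in
`K^n`, with `d_k` the sum of the `k` largest elementary divisors, one has
`d_k(L,N) ≤ d_k(L,M) + d_k(M,N)` for all `1 ≤ k ≤ n`, with equality of total sums:
`d_n(L,N) = d_n(L,M) + d_n(M,N)`. -/
theorem dist_triangle_dominance {F : Type*} [Field F] {n : ℕ}
    (L M N : Submodule (PowerSeries F) (Fin n → LaurentSeries F))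
    (μ ν ρ : Fin n → ℤ)
    (hLM : IsDist L M μ) (hMN : IsDist M N ν) (hLN : IsDist L N ρ) :
    (∀ k : ℕ, 1 ≤ k → k ≤ n → dPartial k ρ ≤ dPartial k μ + dPartial k ν) ∧
      (∑ s, ρ s) = (∑ s, μ s) + ∑ s, ν s := by
  exact dist_triangle_dominance' hLM hMN hLN
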